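/- Let (X_t)_{t∈ℕ^d} be an integrable real-valued random field on a probability space (Ω,𝓕,ℙ), let A ⊂ ℕ^d be a finite set and k ∈ ℕ a fixed integer. Then the family (Z_{b,k}(A), 𝓕_k(b))_{b ∈ π_k(A)}, indexed by π_k(A) := {π_k(t) : t ∈ A} ordered by the total order ≼, is a martingale difference sequence: for each b ∈ π_k(A), Z_{b,k}(A) is 𝓕_k(b)-measurable and integrable, the σ-algebras 𝓕_k(b) are nondecreasing in b along ≼, and E[Z_{b,k}(A) | 𝓕_k(b')] = 0 for every b' ∈ π_k(A) with b' ≺ b. -/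

import Mathlib

open MeasureTheory Finset
open scoped ENNReal

noncomputable section

/-- Dyadic projection at scale `k`: `π_k(t)_i = ⌊t_i / 2^k⌋ · 2^k`. -/
def proj {d : ℕ} (k : ℕ) (t : Fin d → ℕ) : Fin d → ℕ :=
  fun i => t i / 2 ^ k * 2 ^ k

/-- Strict lexicographical order on `ℕ^d`. -/
def lexLT {d : ℕ} (t t' : Fin d → ℕ) : Prop :=
  ∃ i, (∀ j, j < i → t j = t' j) ∧ t i < t' i

/-- `κ(t,t') + 1 = min{k : π_k(t) = π_k(t')}`. -/
def kappaSucc {d : ℕ} (t t' : Fin d → ℕ) : ℕ :=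
  sInf {k | proj k t = proj k t'}

/-- The total order `≼` on `ℕ^d`: `t ≼ t'` iff `t = t'` or
`π_{κ(t,t')}(t) <_lex π_{κ(t,t')}(t')` where `κ(t,t') = min{k : π_k(t) = π_k(t')} − 1`. -/
def dyadicLE {d : ℕ} (t t' : Fin d → ℕ) : Prop :=
  t = t' ∨ lexLT (proj (kappaSucc t t' - 1) t) (proj (kappaSucc t t' - 1) t')

/-- The strict order `≺` associated to `≼`. -/
def dyadicLT {d : ℕ} (t t' : Fin d → ℕ) : Prop :=
  dyadicLE t t' ∧ t ≠ t'

/-- `Π_k^≺(t) = {t' : π_k(t') ≺ π_k(t)}`. -/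
def PiPrec {d : ℕ} (k : ℕ) (t : Fin d → ℕ) : Set (Fin d → ℕ) :=
  {t' | dyadicLT (proj k t') (proj k t)}

/-- `Π_k(t) = {t' : π_k(t') ≼ π_k(t)}`. -/
def PiLE {d : ℕ} (k : ℕ) (t : Fin d → ℕ) : Set (Fin d → ℕ) :=
  {t' | dyadicLE (proj k t') (proj k t)}

/-- The dyadic cell `C_{k,b} = {b} + {0,…,2^k−1}^d`. -/
def cell {d : ℕ} (k : ℕ) (b : Fin d → ℕ) : Set (Fin d → ℕ) :=
  {t | ∀ i, b i ≤ t i ∧ t i < b i + 2 ^ k}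

/-- `𝓕_k^≺(t) = σ(X_{t'} : t' ∈ Π_k^≺(t))` (the trivial σ-algebra if the set is empty). -/
def Fprec {Ω : Type*} {d : ℕ} (X : (Fin d → ℕ) → Ω → ℝ) (k : ℕ) (t : Fin d → ℕ) :
    MeasurableSpace Ω :=
  ⨆ t' ∈ PiPrec k t, MeasurableSpace.comap (X t') Real.measurableSpace

/-- `𝓕_k(t) = σ(X_{t'} : t' ∈ Π_k(t))`. -/
def Fle {Ω : Type*} {d : ℕ} (X : (Fin d → ℕ) → Ω → ℝ) (k : ℕ) (t : Fin d → ℕ) :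
    MeasurableSpace Ω :=
  ⨆ t' ∈ PiLE k t, MeasurableSpace.comap (X t') Real.measurableSpace

/-- The martingale increments: `Z_{t,0}(A) = X_t − E[X_t | 𝓕_0^≺(t)]`, and for `k ≥ 1`,
`Z_{b,k}(A) = Σ_{t ∈ C_{k,b} ∩ A} (E[X_t | 𝓕_k^≺(t)] − E[X_t | 𝓕_{k−1}^≺(t)])`. -/
def Zmart {Ω : Type*} [MeasurableSpace Ω] (μ : Measure Ω) {d : ℕ}
    (X : (Fin d → ℕ) → Ω → ℝ) (A : Finset (Fin d → ℕ)) (k : ℕ) (b : Fin d → ℕ) : Ω → ℝ :=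
  if k = 0 then X b - μ[X b | Fprec X 0 b]
  else fun ω => ∑ t ∈ A.filter (fun t => ∀ i, b i ≤ t i ∧ t i < b i + 2 ^ k),
    ((μ[X t | Fprec X k t]) ω - (μ[X t | Fprec X (k - 1) t]) ω)


section OrderLemmas

variable {d : ℕ}

lemma proj_zero (t : Fin d → ℕ) : proj 0 t = t := by
  funext i; simp [proj]

lemma proj_proj_of_le {m k : ℕ} (h : m ≤ k) (t : Fin d → ℕ) :
    proj m (proj k t) = proj k t := by
  funext i
  exact Nat.div_mul_cancel ((pow_dvd_pow 2 h).mul_left _)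

lemma proj_proj_of_ge {m k : ℕ} (h : k ≤ m) (t : Fin d → ℕ) :
    proj m (proj k t) = proj m t := by
  funext i
  show t i / 2 ^ k * 2 ^ k / 2 ^ m * 2 ^ m = t i / 2 ^ m * 2 ^ m
  congr 1
  rw [show (2:ℕ) ^ m = 2 ^ k * 2 ^ (m - k) by rw [← pow_add]; congr 1; omega]
  rw [← Nat.div_div_eq_div_mul, ← Nat.div_div_eq_div_mul,
    Nat.mul_div_cancel _ (Nat.pow_pos (n := k) (by norm_num))]

lemma proj_eq_mono {m k : ℕ} (h : k ≤ m) {t t' : Fin d → ℕ}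
    (he : proj k t = proj k t') : proj m t = proj m t' := by
  rw [← proj_proj_of_ge h t, ← proj_proj_of_ge h t', he]

lemma kappa_set_nonempty (t t' : Fin d → ℕ) :
    {k | proj k t = proj k t'}.Nonempty := by
  classical
  set K : ℕ := Finset.univ.sup (fun i => max (t i) (t' i)) with hK
  refine ⟨K, funext fun i => ?_⟩
  have hs : max (t i) (t' i) ≤ K :=
    Finset.le_sup (f := fun i => max (t i) (t' i)) (Finset.mem_univ i)
  have h1 : t i < 2 ^ K :=
    lt_of_le_of_lt (le_trans (le_max_left _ _) hs) (Nat.lt_two_pow_self (n := K))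
  have h2 : t' i < 2 ^ K :=
    lt_of_le_of_lt (le_trans (le_max_right _ _) hs) (Nat.lt_two_pow_self (n := K))
  show t i / 2 ^ K * 2 ^ K = t' i / 2 ^ K * 2 ^ K
  rw [Nat.div_eq_of_lt h1, Nat.div_eq_of_lt h2]

lemma kappa_mem_iff {t t' : Fin d → ℕ} {m : ℕ} :
    proj m t = proj m t' ↔ kappaSucc t t' ≤ m := by
  constructor
  · exact fun h => Nat.sInf_le h
  · intro h
    exact proj_eq_mono h (Nat.sInf_mem (kappa_set_nonempty t t'))

lemma kappaSucc_pos {t t' : Fin d → ℕ} (h : t ≠ t') : 0 < kappaSucc t t' := by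
  rcases (Nat.eq_zero_or_pos (kappaSucc t t')).symm with h1 | h1
  · exact h1
  · exact absurd (by simpa [proj_zero] using kappa_mem_iff.mpr h1.le) h

lemma proj_kappa_ne {t t' : Fin d → ℕ} (h : t ≠ t') :
    proj (kappaSucc t t' - 1) t ≠ proj (kappaSucc t t' - 1) t' := by
  intro he
  have := kappa_mem_iff.mp he
  have := kappaSucc_pos h
  omega

lemma kappaSucc_symm (t t' : Fin d → ℕ) : kappaSucc t t' = kappaSucc t' t := by
  unfold kappaSucc
  congr 1
  ext m
  exact ⟨Eq.symm, Eq.symm⟩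

lemma kappaSucc_eq {t t' : Fin d → ℕ} {κ : ℕ}
    (hne : proj κ t ≠ proj κ t') (he : proj (κ + 1) t = proj (κ + 1) t') :
    kappaSucc t t' = κ + 1 := by
  have h1 := kappa_mem_iff.mp he
  have h2 : ¬ kappaSucc t t' ≤ κ := fun h => hne (kappa_mem_iff.mpr h)
  omega

lemma lexLT_ne {f g : Fin d → ℕ} (h : lexLT f g) : f ≠ g := by
  obtain ⟨i, _, hi⟩ := h
  intro he; rw [he] at hi; omega

lemma lexLT_total {f g : Fin d → ℕ} (h : f ≠ g) : lexLT f g ∨ lexLT g f := by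
  classical
  have hne : (Finset.univ.filter (fun i => f i ≠ g i)).Nonempty := by
    by_contra hc
    exact h (funext fun i => by
      by_contra hfi
      exact hc ⟨i, by simp [hfi]⟩)
  set i₀ := (Finset.univ.filter (fun i => f i ≠ g i)).min' hne with hi₀
  have hmem : f i₀ ≠ g i₀ :=
    (Finset.mem_filter.mp (Finset.min'_mem _ hne)).2
  have hbelow : ∀ j, j < i₀ → f j = g j := by
    intro j hj
    by_contra hc
    have hle : i₀ ≤ j := Finset.min'_le _ j (Finset.mem_filter.mpr ⟨Finset.mem_univ _, hc⟩)
    exact absurd hj (not_lt.mpr hle)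
  rcases lt_or_gt_of_ne hmem with h1 | h1
  · exact Or.inl ⟨i₀, hbelow, h1⟩
  · exact Or.inr ⟨i₀, fun j hj => (hbelow j hj).symm, h1⟩

lemma lexLT_asymm {f g : Fin d → ℕ} (h1 : lexLT f g) (h2 : lexLT g f) : False := by
  obtain ⟨i, hib, hi⟩ := h1
  obtain ⟨j, hjb, hj⟩ := h2
  rcases lt_trichotomy i j with hc | hc | hc
  · have := hjb i hc; omega
  · subst hc; omega
  · have := hib j hc; omega

lemma lexLT_trans {f g h : Fin d → ℕ} (h1 : lexLT f g) (h2 : lexLT g h) : lexLT f h := by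
  obtain ⟨i, hib, hi⟩ := h1
  obtain ⟨j, hjb, hj⟩ := h2
  rcases lt_trichotomy i j with hc | hc | hc
  · exact ⟨i, fun l hl => (hib l hl).trans (hjb l (hl.trans hc)), by rw [← hjb i hc]; exact hi⟩
  · subst hc; exact ⟨i, fun l hl => (hib l hl).trans (hjb l hl), by omega⟩
  · exact ⟨j, fun l hl => (hib l (hl.trans hc)).trans (hjb l hl), by rw [hib j hc]; omega⟩

lemma dyadicLE_refl (t : Fin d → ℕ) : dyadicLE t t := Or.inl rfl

lemma dyadicLE_total (t t' : Fin d → ℕ) : dyadicLE t t' ∨ dyadicLE t' t := by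
  by_cases h : t = t'
  · exact Or.inl (Or.inl h)
  · rcases lexLT_total (proj_kappa_ne h) with h1 | h1
    · exact Or.inl (Or.inr h1)
    · refine Or.inr (Or.inr ?_)
      rwa [kappaSucc_symm t' t]

lemma dyadicLE_antisymm {t t' : Fin d → ℕ} (h1 : dyadicLE t t') (h2 : dyadicLE t' t) :
    t = t' := by
  by_contra h
  rcases h1 with h1 | h1
  · exact h h1
  rcases h2 with h2 | h2
  · exact h h2.symm
  rw [kappaSucc_symm t' t] at h2
  exact lexLT_asymm h1 h2

lemma dyadicLE_trans {t t' t'' : Fin d → ℕ} (h1 : dyadicLE t t') (h2 : dyadicLE t' t'') :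
    dyadicLE t t'' := by
  rcases h1 with h1 | h1
  · rwa [h1]
  rcases h2 with h2 | h2
  · rw [← h2]; exact Or.inr h1
  have hne1 : t ≠ t' := fun he => lexLT_ne h1 (by rw [he])
  have hne2 : t' ≠ t'' := fun he => lexLT_ne h2 (by rw [he])
  have hp1 : 0 < kappaSucc t t' := kappaSucc_pos hne1
  have hp2 : 0 < kappaSucc t' t'' := kappaSucc_pos hne2
  set κ₁ := kappaSucc t t' - 1 with hκ₁
  set κ₂ := kappaSucc t' t'' - 1 with hκ₂
  have he1 : proj (κ₁ + 1) t = proj (κ₁ + 1) t' := kappa_mem_iff.mpr (by omega)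
  have he2 : proj (κ₂ + 1) t' = proj (κ₂ + 1) t'' := kappa_mem_iff.mpr (by omega)
  have hne1' : proj κ₁ t ≠ proj κ₁ t' := proj_kappa_ne hne1
  have hne2' : proj κ₂ t' ≠ proj κ₂ t'' := proj_kappa_ne hne2
  rcases lt_trichotomy κ₁ κ₂ with hc | hc | hc
  · -- κ₁ < κ₂ : comparison happens at κ₂; proj κ₂ t = proj κ₂ t'
    have heq : proj κ₂ t = proj κ₂ t' := proj_eq_mono (by omega) he1
    have hlex : lexLT (proj κ₂ t) (proj κ₂ t'') := by rwa [heq]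
    have hks : kappaSucc t t'' = κ₂ + 1 := by
      refine kappaSucc_eq (fun hcon => ?_) ?_
      · exact hne2' (by rw [← heq]; exact hcon)
      · exact (proj_eq_mono (by omega) he1).trans he2
    refine Or.inr ?_
    rw [hks]
    simpa using hlex
  · -- κ₁ = κ₂
    have hlex : lexLT (proj κ₁ t) (proj κ₁ t'') := lexLT_trans h1 (by rwa [← hc] at h2)
    have hks : kappaSucc t t'' = κ₁ + 1 := by
      refine kappaSucc_eq (fun hcon => lexLT_ne hlex hcon) ?_
      exact he1.trans (by rw [hc]; exact he2)
    refine Or.inr ?_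
    rw [hks]
    simpa using hlex
  · -- κ₂ < κ₁
    have heq : proj κ₁ t' = proj κ₁ t'' := proj_eq_mono (by omega) he2
    have hlex : lexLT (proj κ₁ t) (proj κ₁ t'') := by rwa [heq] at h1
    have hks : kappaSucc t t'' = κ₁ + 1 := by
      refine kappaSucc_eq (fun hcon => hne1' (by rw [heq]; exact hcon)) ?_
      exact he1.trans (proj_eq_mono (by omega) he2)
    refine Or.inr ?_
    rw [hks]
    simpa using hlex

end OrderLemmas

section OrderLemmas2

variable {d : ℕ}

lemma dyadicLT_of_le_of_lt {x y z : Fin d → ℕ} (h1 : dyadicLE x y) (h2 : dyadicLT y z) :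
    dyadicLT x z := by
  refine ⟨dyadicLE_trans h1 h2.1, fun he => ?_⟩
  subst he
  exact h2.2 (dyadicLE_antisymm h2.1 h1)

lemma dyadicLE_proj {t t' : Fin d → ℕ} (k : ℕ) (h : dyadicLE t t') :
    dyadicLE (proj k t) (proj k t') := by
  by_cases hpe : proj k t = proj k t'
  · exact Or.inl hpe
  have hne : t ≠ t' := fun he => hpe (by rw [he])
  have h1 : lexLT (proj (kappaSucc t t' - 1) t) (proj (kappaSucc t t' - 1) t') := by
    rcases h with h | h
    · exact absurd h hne
    · exact h
  have hp : 0 < kappaSucc t t' := kappaSucc_pos hne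
  set κ := kappaSucc t t' - 1 with hκ
  have hκk : k ≤ κ := by
    have : ¬ kappaSucc t t' ≤ k := fun hc => hpe (kappa_mem_iff.mpr hc)
    omega
  have hks : kappaSucc (proj k t) (proj k t') = κ + 1 := by
    refine kappaSucc_eq ?_ ?_
    · rw [proj_proj_of_ge hκk, proj_proj_of_ge hκk]
      exact proj_kappa_ne hne
    · rw [proj_proj_of_ge (by omega), proj_proj_of_ge (by omega)]
      exact kappa_mem_iff.mpr (by omega)
  refine Or.inr ?_
  rw [hks]
  simpa [proj_proj_of_ge hκk] using h1

lemma dyadicLT_proj_down {s t : Fin d → ℕ} {j k : ℕ} (hjk : j ≤ k)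
    (h : dyadicLT (proj k s) (proj k t)) : dyadicLT (proj j s) (proj j t) := by
  have hne : proj j s ≠ proj j t := fun he => h.2 (proj_eq_mono hjk he)
  refine ⟨?_, hne⟩
  rcases dyadicLE_total (proj j s) (proj j t) with h1 | h1
  · exact h1
  · have := dyadicLE_proj k h1
    rw [proj_proj_of_ge hjk, proj_proj_of_ge hjk] at this
    exact absurd (dyadicLE_antisymm h.1 this) h.2

lemma proj_idem {k : ℕ} (t : Fin d → ℕ) : proj k (proj k t) = proj k t :=
  proj_proj_of_le le_rfl t

lemma proj_cell {k : ℕ} {b t : Fin d → ℕ} (hb : proj k b = b)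
    (ht : ∀ i, b i ≤ t i ∧ t i < b i + 2 ^ k) : proj k t = b := by
  funext i
  have hbi : b i / 2 ^ k * 2 ^ k = b i := congrFun hb i
  have h1 : b i / 2 ^ k * 2 ^ k ≤ t i := by rw [hbi]; exact (ht i).1
  have h2 : t i < (b i / 2 ^ k + 1) * 2 ^ k := by
    rw [add_mul, one_mul, hbi]; exact (ht i).2
  show t i / 2 ^ k * 2 ^ k = b i
  rw [Nat.div_eq_of_lt_le h1 (by simpa using h2), hbi]

end OrderLemmas2

/-- Lemma: for each fixed scale `k`, the family `(Z_{b,k}(A), 𝓕_k(b))_{b ∈ π_k(A)}`,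
with `π_k(A)` ordered by the total order `≼`, is a martingale difference sequence. -/
theorem Zmart_martingale_difference
    {Ω : Type*} [mΩ : MeasurableSpace Ω] (μ : Measure Ω) [IsProbabilityMeasure μ]
    (d : ℕ) (X : (Fin d → ℕ) → Ω → ℝ)
    (hXmeas : ∀ t, Measurable (X t))
    (hXint : ∀ t, Integrable (X t) μ)
    (A : Finset (Fin d → ℕ)) (k : ℕ) :
    (∀ b ∈ A.image (proj k),
        Measurable[Fle X k b] (Zmart μ X A k b) ∧ Integrable (Zmart μ X A k b) μ) ∧
    (∀ b ∈ A.image (proj k), ∀ b' ∈ A.image (proj k),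
        dyadicLE b' b → Fle X k b' ≤ Fle X k b) ∧
    (∀ b ∈ A.image (proj k), ∀ b' ∈ A.image (proj k),
        dyadicLT b' b → μ[Zmart μ X A k b | Fle X k b'] =ᵐ[μ] 0) := by
  classical
  have hFprec_le : ∀ (j : ℕ) (t : Fin d → ℕ), Fprec X j t ≤ mΩ :=
    fun j t => iSup₂_le fun s _ => (hXmeas s).comap_le
  have hFle_le : ∀ (j : ℕ) (t : Fin d → ℕ), Fle X j t ≤ mΩ :=
    fun j t => iSup₂_le fun s _ => (hXmeas s).comap_le
  have hproj_mem : ∀ b ∈ A.image (proj k), proj k b = b := by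
    intro b hb
    obtain ⟨a, _, rfl⟩ := Finset.mem_image.mp hb
    exact proj_idem a
  have part2 : ∀ b' b : Fin d → ℕ, proj k b' = b' → proj k b = b → dyadicLE b' b →
      Fle X k b' ≤ Fle X k b := by
    intro b' b hb' hb hle
    refine iSup₂_le fun s hs => le_iSup₂_of_le s ?_ le_rfl
    have hs' : dyadicLE (proj k s) (proj k b') := hs
    rw [hb'] at hs'
    show dyadicLE (proj k s) (proj k b)
    rw [hb]
    exact dyadicLE_trans hs' hle
  have part1 : ∀ b ∈ A.image (proj k),
      Measurable[Fle X k b] (Zmart μ X A k b) ∧ Integrable (Zmart μ X A k b) μ := by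
    intro b hb
    have hbfix := hproj_mem b hb
    by_cases hk : k = 0
    · subst hk
      have hZ : Zmart μ X A 0 b = X b - μ[X b | Fprec X 0 b] := by unfold Zmart; exact if_pos rfl
      have hXb : Measurable[Fle X 0 b] (X b) := by
        refine Measurable.of_comap_le (le_iSup₂_of_le b ?_ le_rfl)
        show dyadicLE (proj 0 b) (proj 0 b)
        exact dyadicLE_refl _
      have hprec_le : Fprec X 0 b ≤ Fle X 0 b := by
        refine iSup₂_le fun s hs => le_iSup₂_of_le s ?_ le_rfl
        have hs' : dyadicLT (proj 0 s) (proj 0 b) := hs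
        exact hs'.1
      rw [hZ]
      exact ⟨hXb.sub ((stronglyMeasurable_condExp.mono hprec_le).measurable),
        (hXint b).sub integrable_condExp⟩
    · have hZ : Zmart μ X A k b
          = fun ω => ∑ t ∈ A.filter (fun t => ∀ i, b i ≤ t i ∧ t i < b i + 2 ^ k),
            ((μ[X t | Fprec X k t]) ω - (μ[X t | Fprec X (k - 1) t]) ω) := by unfold Zmart; exact if_neg hk
      have hcell : ∀ t ∈ A.filter (fun t => ∀ i, b i ≤ t i ∧ t i < b i + 2 ^ k),
          proj k t = b := fun t ht => proj_cell hbfix (Finset.mem_filter.mp ht).2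
      have hk1 : ∀ t : Fin d → ℕ, proj k t = b → Fprec X k t ≤ Fle X k b := by
        intro t htb
        refine iSup₂_le fun s hs => le_iSup₂_of_le s ?_ le_rfl
        have hs' : dyadicLT (proj k s) (proj k t) := hs
        show dyadicLE (proj k s) (proj k b)
        rw [hbfix, ← htb]
        exact hs'.1
      have hk2 : ∀ t : Fin d → ℕ, proj k t = b → Fprec X (k - 1) t ≤ Fle X k b := by
        intro t htb
        refine iSup₂_le fun s hs => le_iSup₂_of_le s ?_ le_rfl
        have hs' : dyadicLT (proj (k - 1) s) (proj (k - 1) t) := hs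
        have hmono := dyadicLE_proj k hs'.1
        rw [proj_proj_of_ge (Nat.sub_le k 1), proj_proj_of_ge (Nat.sub_le k 1)] at hmono
        show dyadicLE (proj k s) (proj k b)
        rw [hbfix, ← htb]
        exact hmono
      rw [hZ]
      constructor
      · refine Finset.measurable_sum _ fun t ht => Measurable.sub ?_ ?_
        · exact (stronglyMeasurable_condExp.mono (hk1 t (hcell t ht))).measurable
        · exact (stronglyMeasurable_condExp.mono (hk2 t (hcell t ht))).measurable
      · exact integrable_finset_sum _ fun t _ => integrable_condExp.sub integrable_condExp
  refine ⟨part1, fun b hb b' hb' h => part2 b' b (hproj_mem b' hb') (hproj_mem b hb) h, ?_⟩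
  intro b hb b' hb' hlt
  have hbfix := hproj_mem b hb
  have hb'fix := hproj_mem b' hb'
  by_cases hk : k = 0
  · subst hk
    have hZ : Zmart μ X A 0 b = X b - μ[X b | Fprec X 0 b] := by unfold Zmart; exact if_pos rfl
    have hle : (Fle X 0 b') ≤ Fprec X 0 b := by
      refine iSup₂_le fun s hs => le_iSup₂_of_le s ?_ le_rfl
      have hs' : dyadicLE (proj 0 s) (proj 0 b') := hs
      rw [hb'fix] at hs'
      show dyadicLT (proj 0 s) (proj 0 b)
      rw [hbfix]
      exact dyadicLT_of_le_of_lt hs' hlt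
    calc μ[Zmart μ X A 0 b | (Fle X 0 b')]
        =ᵐ[μ] μ[X b | (Fle X 0 b')] - μ[μ[X b | Fprec X 0 b] | (Fle X 0 b')] := by
          rw [hZ]; exact condExp_sub (hXint b) integrable_condExp _
      _ =ᵐ[μ] μ[X b | (Fle X 0 b')] - μ[X b | (Fle X 0 b')] :=
          Filter.EventuallyEq.sub (Filter.EventuallyEq.refl _ _)
            (condExp_condExp_of_le hle (hFprec_le 0 b))
      _ =ᵐ[μ] 0 := by rw [sub_self]
  · have hZ : Zmart μ X A k b
        = ∑ t ∈ A.filter (fun t => ∀ i, b i ≤ t i ∧ t i < b i + 2 ^ k),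
          (μ[X t | Fprec X k t] - μ[X t | Fprec X (k - 1) t]) := by
      funext ω
      simp only [Zmart, if_neg hk, Finset.sum_apply, Pi.sub_apply]
    have hcell : ∀ t ∈ A.filter (fun t => ∀ i, b i ≤ t i ∧ t i < b i + 2 ^ k),
        proj k t = b := fun t ht => proj_cell hbfix (Finset.mem_filter.mp ht).2
    have hlow : ∀ t : Fin d → ℕ, proj k t = b → (Fle X k b') ≤ Fprec X k t := by
      intro t htb
      refine iSup₂_le fun s hs => le_iSup₂_of_le s ?_ le_rfl
      have hs' : dyadicLE (proj k s) (proj k b') := hs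
      rw [hb'fix] at hs'
      show dyadicLT (proj k s) (proj k t)
      rw [htb]
      exact dyadicLT_of_le_of_lt hs' hlt
    have hlow' : ∀ t : Fin d → ℕ, proj k t = b → (Fle X k b') ≤ Fprec X (k - 1) t := by
      intro t htb
      refine iSup₂_le fun s hs => le_iSup₂_of_le s ?_ le_rfl
      have hs' : dyadicLE (proj k s) (proj k b') := hs
      rw [hb'fix] at hs'
      show dyadicLT (proj (k - 1) s) (proj (k - 1) t)
      refine dyadicLT_proj_down (Nat.sub_le k 1) ?_
      rw [htb]
      exact dyadicLT_of_le_of_lt hs' hlt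
    have hterm : ∀ t ∈ A.filter (fun t => ∀ i, b i ≤ t i ∧ t i < b i + 2 ^ k),
        μ[(μ[X t | Fprec X k t] - μ[X t | Fprec X (k - 1) t]) | (Fle X k b')] =ᵐ[μ] 0 := by
      intro t ht
      have htb := hcell t ht
      calc μ[(μ[X t | Fprec X k t] - μ[X t | Fprec X (k - 1) t]) | (Fle X k b')]
          =ᵐ[μ] μ[μ[X t | Fprec X k t] | (Fle X k b')] - μ[μ[X t | Fprec X (k - 1) t] | (Fle X k b')] :=
            condExp_sub integrable_condExp integrable_condExp _
        _ =ᵐ[μ] μ[X t | (Fle X k b')] - μ[X t | (Fle X k b')] :=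
            Filter.EventuallyEq.sub
              (condExp_condExp_of_le (hlow t htb) (hFprec_le k t))
              (condExp_condExp_of_le (hlow' t htb) (hFprec_le (k - 1) t))
        _ =ᵐ[μ] 0 := by rw [sub_self]
    rw [hZ]
    calc μ[∑ t ∈ A.filter (fun t => ∀ i, b i ≤ t i ∧ t i < b i + 2 ^ k),
          (μ[X t | Fprec X k t] - μ[X t | Fprec X (k - 1) t]) | (Fle X k b')]
        =ᵐ[μ] ∑ t ∈ A.filter (fun t => ∀ i, b i ≤ t i ∧ t i < b i + 2 ^ k),
          μ[(μ[X t | Fprec X k t] - μ[X t | Fprec X (k - 1) t]) | (Fle X k b')] :=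
          condExp_finsetSum (fun t _ => integrable_condExp.sub integrable_condExp) _
      _ =ᵐ[μ] 0 := by
          have hall := (Filter.eventually_all_finset _).mpr hterm
          filter_upwards [hall] with ω hω
          simp only [Finset.sum_apply, Pi.zero_apply]
          exact Finset.sum_eq_zero fun t ht => hω t ht
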